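/- (Soundness, procedure-call case.) Suppose correspondence is preserved by the rules generated by Φ([l/x₂]S, n_k, n_q, p', ∅) for the substituted body of the callee p' (induction hypothesis). Then correspondence is preserved by Φ((proc(in x₁, out x₂)S)(e, l), nᵢ, nⱼ, p, R), where l ∈ dom(μ) is a global location: the operational rule CALL allocates a fresh location l' for x₁ with value the evaluation of e and deallocates it on return, while the P-PROC rule pushes a new stack frame for p' with η(p')[x₁] := e and return point nⱼ, and the callee's exit rule pops the frame. If (μ₀,λ₀) with procedure p topmost corresponds to ⟨ρ₀,θ₀⟩, then the configuration at entry of the callee corresponds to the pushed pushdown state, and after return the final configuration (μ', λ') corresponds to the final pushdown state ⟨ρ',θ'⟩ at nⱼ; in particular the caller's local variables are unchanged across the call (dom(λ') = dom(λ₀) and λ'(l) = λ₀(l) for all l ∈ dom(λ'), matching η'(p) = η₀(p)). -/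
import Mathlib


/-!
STATEMENT 12 (Soundness, procedure-call case).  Setup as in the other
soundness cases.  `Gp` records which stack locations correspond to which
local variables of the caller p, and `Gp'` does the same for the callee p';
the callee cannot see the caller's locals (`hGp'Old`), and the fresh
location l' allocated for the in-parameter x₁ corresponds to x₁ in the
callee frame (`hGl'`).  The out-parameter x₂ has already been substituted
by the global location l ∈ dom(μ) in the callee body ([l/x₂]S), whose
big-step operational relation is `OpBody` and whose pushdown execution
relation (induced by Φ([l/x₂]S, n_k, n_q, p', ∅)) is `PdBody`; by the
induction hypothesis `hIH` these preserve correspondence w.r.t. `Gp'`.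

Rule CALL allocates a fresh l' ∉ dom(μ₀) ∪ dom(λ₀) with value v (the
evaluation of e), giving λ₁ = λ₀ ⊎ [l' := v], executes the body from
(μ₀,λ₁) to (μ₂,λ₂), and deallocates l' on return (λ' = λ₂ \ {l'},
μ' = μ₂).  The P-PROC rule pushes a new stack frame ηc₁ for p' with
ηc₁(x₁) = v (the value of e) and return point nⱼ, runs the callee body from
(ρ₀,ηc₁) to (ρ₂,ηc₂), and the callee's exit rule pops the frame, restoring
the caller's frame: the final pushdown state at nⱼ is (ρ',η') = (ρ₂,η₀).
The common constraint that the currently executing procedure cannot operate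
on the local variables of other procedures gives `hframe` (the callee does
not modify the caller's stack locations) and `hdom` (the body introduces no
stack locations beyond dom(λ₁)).

Conclusions: the configuration (μ₀,λ₁) at entry of the callee corresponds
(w.r.t. Gp') to the pushed pushdown state (ρ₀,ηc₁); after return the final
configuration (μ',λ') corresponds (w.r.t. Gp) to the final pushdown state
⟨ρ',θ'⟩ at nⱼ; in particular the caller's local variables are unchanged
across the call: dom(λ') = dom(λ₀) and λ'(l) = λ₀(l) for all l ∈ dom(λ'),
matching η'(p) = η₀(p).
-/

abbrev Loc := ℕ
abbrev Val := ℤ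
abbrev Var := String

abbrev Cfg := (Loc → Option Val) × (Loc → Option Val)

abbrev PdState := (Loc → Val) × (Var → Val)

def Corresponds (G : Loc → Option Var) (c : Cfg) (s : PdState) : Prop :=
  (∀ l, (c.1 l).isSome → c.1 l = some (s.1 l)) ∧
  (∀ l x, (c.2 l).isSome → G l = some x → c.2 l = some (s.2 x))

def Preserves (G : Loc → Option Var) (Op : Cfg → Cfg → Prop)
    (Pd : PdState → PdState → Prop) : Prop :=
  ∀ c s c' s', Corresponds G c s → Op c c' → Pd s s' → Corresponds G c' s'

theorem soundness_proc (Gp Gp' : Loc → Option Var)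
    (x₁ : Var) (l' : Loc) (v : Val)
    (μ₀ lam₀ lam₁ μ₂ lam₂ μ' lam' : Loc → Option Val)
    (ρ₀ ρ₂ ρ' : Loc → Val) (η₀ η' ηc₁ ηc₂ : Var → Val)
    (OpBody : Cfg → Cfg → Prop) (PdBody : PdState → PdState → Prop)
    -- induction hypothesis for Φ([l/x₂]S, n_k, n_q, p', ∅)
    (hIH : Preserves Gp' OpBody PdBody)
    -- the caller's configuration corresponds to the caller's pushdown state
    (hcorr : Corresponds Gp (μ₀, lam₀) (ρ₀, η₀))
    -- l' is fresh: l' ∉ dom(μ₀) and l' ∉ dom(λ₀)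
    (hfreshμ : μ₀ l' = none) (hfreshlam : lam₀ l' = none)
    -- CALL: λ₁ = λ₀ ⊎ [l' := v], with (μ₀,λ₀,e) ⇓ v
    (hpush : lam₁ = Function.update lam₀ l' (some v))
    -- l' corresponds to the in-parameter x₁ of the callee p'
    (hGl' : Gp' l' = some x₁)
    -- the callee frame does not cover the caller's stack locations
    (hGp'Old : ∀ l, (lam₀ l).isSome → Gp' l = none)
    -- P-PROC: the pushed frame satisfies η_k(p')[x₁ := e]
    (hηc₁ : ηc₁ x₁ = v)
    -- body executions: (μ₀,λ₁,[l/x₂]S) ⇓ (μ₂,λ₂) and (ρ₀,ηc₁) → (ρ₂,ηc₂)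
    (hOp : OpBody (μ₀, lam₁) (μ₂, lam₂)) (hPd : PdBody (ρ₀, ηc₁) (ρ₂, ηc₂))
    -- the callee cannot modify the caller's local variables
    (hframe : ∀ l, (lam₀ l).isSome → lam₂ l = lam₀ l)
    -- the body introduces no stack locations beyond dom(λ₁)
    (hdom : ∀ l, (lam₂ l).isSome → (lam₁ l).isSome)
    -- return: μ' = μ₂, λ' = λ₂ \ {l'}
    (hμ' : μ' = μ₂) (hpop : lam' = fun l => if l = l' then none else lam₂ l)
    -- the pop rule restores the caller's frame: final state (ρ₂, η₀) at nⱼ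
    (hρ' : ρ' = ρ₂) (hη' : η' = η₀) :
    Corresponds Gp' (μ₀, lam₁) (ρ₀, ηc₁) ∧
    Corresponds Gp (μ', lam') (ρ', η') ∧
    (∀ l, (lam' l).isSome ↔ (lam₀ l).isSome) ∧
    (∀ l, (lam' l).isSome → lam' l = lam₀ l) := by
  subst hpush hμ' hpop hρ' hη'
  have hentry : Corresponds Gp' (μ₀, Function.update lam₀ l' (some v)) (ρ₀, ηc₁) := by
    constructor
    · exact hcorr.1
    · intro l x hs hG
      by_cases h : l = l'
      · subst h
        simp [Function.update] at hs ⊢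
        rw [hGl'] at hG
        injection hG with h'
        rw [← h', hηc₁]
      · simp [Function.update, h] at hs ⊢
        exact absurd (hGp'Old l hs) (by rw [hG]; simp)
  have hmid := hIH _ _ _ _ hentry hOp hPd
  refine ⟨hentry, ?_, ?_, ?_⟩
  · constructor
    · exact hmid.1
    · intro l x hs hG
      simp only at hs ⊢
      by_cases h : l = l'
      · simp [h] at hs
      · simp [h] at hs ⊢
        have h1 := hdom l hs
        simp [Function.update, h] at h1
        rw [hframe l h1]; exact hcorr.2 l x h1 hG
  · intro l
    by_cases h : l = l'
    · subst h; simp [hfreshlam]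
    · simp only [h, if_false]
      constructor
      · intro hs
        have h1 := hdom l hs
        simpa [Function.update, h] using h1
      · intro hs; rw [hframe l hs]; exact hs
  · intro l hs
    by_cases h : l = l'
    · subst h; simp at hs
    · simp [h] at hs ⊢
      have h1 := hdom l hs
      simp [Function.update, h] at h1
      exact hframe l h1
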